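/- Let H be a real Hilbert space, let D′ ⊆ H be a set such that the open ball B(0, r) is contained in conv(D′) for some r > 0, and let f : H → ℝ be Fréchet differentiable, convex, and C-sharp of order θ ∈ (0,1) on K (for some C > 0). Let x ∈ H with f(x) > min_H f, let x* := proj_{argmin_H f}(x), and let ρ ∈ (0, 1] be such that x* + ρ(x − x*) ∈ K. Then f(x) − min_H f ≤ (1/ρ) · ((2C/r) · sup_{z ∈ conv(D′)} ⟨−∇f(x), z⟩)^{1/(1−θ)}. -/

import Mathlib

open RealInnerProductSpace

/-- If `B(0, r) ⊆ conv(D')`, `f` is Fréchet differentiable, convex, and `C`-sharp of order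
`θ ∈ (0,1)` on `K`, `f x > min f`, `xs` is the projection of `x` onto `argmin f`, and
`ρ ∈ (0,1]` satisfies `xs + ρ (x - xs) ∈ K`, then
`f x - min f ≤ (1/ρ) ((2C/r) sup_{z ∈ conv(D')} ⟪-∇f x, z⟫)^(1/(1-θ))`
(the supremum being expressed via upper bounds). -/
theorem stmt_13
    {H : Type*} [NormedAddCommGroup H] [InnerProductSpace ℝ H] [CompleteSpace H]
    (D' : Set H) (r : ℝ) (hr : 0 < r)
    (hball : Metric.ball (0 : H) r ⊆ convexHull ℝ D')
    (f : H → ℝ) (f' : H → H) (hdiff : ∀ x, HasGradientAt f (f' x) x)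
    (hconv : ConvexOn ℝ Set.univ f)
    (C θ : ℝ) (hC : 0 < C) (hθ : θ ∈ Set.Ioo (0 : ℝ) 1)
    (K : Set H) (hK : Bornology.IsBounded K)
    (hne : {z : H | ∀ y, f z ≤ f y}.Nonempty)
    (hsub : {z : H | ∀ y, f z ≤ f y} ⊆ interior K)
    (hsharp : ∀ w ∈ K, ∀ m ∈ {z : H | ∀ y, f z ≤ f y},
      Metric.infDist w {z : H | ∀ y, f z ≤ f y} ≤ C * (f w - f m) ^ θ)
    (x xs : H) (hxsmem : xs ∈ {z : H | ∀ y, f z ≤ f y})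
    (hxsproj : ∀ m ∈ {z : H | ∀ y, f z ≤ f y}, ⟪x - xs, m - xs⟫ ≤ 0)
    (hfx : f xs < f x)
    (ρ : ℝ) (hρ : ρ ∈ Set.Ioc (0 : ℝ) 1)
    (hmem : xs + ρ • (x - xs) ∈ K) :
    ∀ b : ℝ, (∀ z ∈ convexHull ℝ D', ⟪-f' x, z⟫ ≤ b) →
      f x - f xs ≤ 1 / ρ * (2 * C / r * b) ^ (1 / (1 - θ)) := by
  obtain ⟨hθ0, hθ1⟩ := hθ
  obtain ⟨hρ0, hρ1⟩ := hρ
  intro b hb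
  have h1θ : (0:ℝ) < 1 - θ := by linarith
  set Δ : ℝ := f x - f xs with hΔdef
  have hΔ : 0 < Δ := sub_pos.mpr hfx
  have hxne : x - xs ≠ 0 := by
    intro h
    rw [sub_eq_zero] at h
    rw [h] at hfx
    exact lt_irrefl _ hfx
  set s : ℝ := ‖x - xs‖ with hsdef
  have hs : 0 < s := norm_pos_iff.mpr hxne
  -- b is nonnegative
  have hb0 : 0 ≤ b := by
    have h0 : (0 : H) ∈ Metric.ball (0 : H) r := by simpa using hr
    have := hb 0 (hball h0)
    simpa using this
  -- gradient inequality from convexity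
  have hgrad : Δ ≤ ⟪-f' x, xs - x⟫ := by
    have hline : HasDerivAt (fun t : ℝ => x + t • (xs - x)) (xs - x) 0 := by
      simpa using ((hasDerivAt_id (0:ℝ)).smul_const (xs - x)).const_add x
    have hfd : HasFDerivAt f (InnerProductSpace.toDual ℝ H (f' x)) x :=
      (hdiff x).hasFDerivAt
    have hfd' : HasFDerivAt f (InnerProductSpace.toDual ℝ H (f' x))
        ((fun t : ℝ => x + t • (xs - x)) 0) := by simpa using hfd
    have hcomp : HasDerivAt (fun t : ℝ => f (x + t • (xs - x))) ⟪f' x, xs - x⟫ 0 := by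
      have := hfd'.comp_hasDerivAt 0 hline
      simpa [InnerProductSpace.toDual_apply_apply, Function.comp_def] using this
    have hgconv : ConvexOn ℝ Set.univ (fun t : ℝ => f (x + t • (xs - x))) := by
      have := hconv.comp_affineMap (AffineMap.lineMap x xs)
      have heq : (f ∘ (AffineMap.lineMap x xs)) = fun t : ℝ => f (x + t • (xs - x)) := by
        funext t
        simp only [Function.comp_apply, AffineMap.lineMap_apply_module]
        congr 1
        module
      rw [heq] at this
      simpa using this
    have hslope := hgconv.le_slope_of_hasDerivAt (Set.mem_univ (0:ℝ)) (Set.mem_univ (1:ℝ))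
      one_pos hcomp
    have : ⟪f' x, xs - x⟫ ≤ f xs - f x := by
      have h01 : slope (fun t : ℝ => f (x + t • (xs - x))) 0 1 = f xs - f x := by
        rw [slope_def_field]
        simp
      rw [h01] at hslope
      exact hslope
    have hil : ⟪-f' x, xs - x⟫ = -⟪f' x, xs - x⟫ := by
      rw [inner_neg_left]
    rw [hil]
    linarith
  -- ball argument: (r / (2*s)) * Δ ≤ b
  have hkey1 : r / (2 * s) * Δ ≤ b := by
    set c : ℝ := r / (2 * s) with hcdef
    have hc : 0 < c := by positivity
    have hzmem : c • (xs - x) ∈ Metric.ball (0 : H) r := by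
      rw [mem_ball_zero_iff, norm_smul, Real.norm_eq_abs, abs_of_pos hc]
      have : ‖xs - x‖ = s := by rw [hsdef, norm_sub_rev]
      rw [this, hcdef]
      have heq : r / (2 * s) * s = r / 2 := by
        field_simp
      rw [heq]
      linarith
    have := hb _ (hball hzmem)
    rw [real_inner_smul_right] at this
    calc c * Δ ≤ c * ⟪-f' x, xs - x⟫ := by
          exact mul_le_mul_of_nonneg_left hgrad hc.le
      _ ≤ b := this
  -- sharpness at y := xs + ρ • (x - xs)
  have hkey2 : ρ * s ≤ C * (ρ * Δ) ^ θ := by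
    set y : H := xs + ρ • (x - xs) with hydef
    have hSne : ({z : H | ∀ y, f z ≤ f y}).Nonempty := hne
    -- lower bound on infDist
    have hlow : ρ * s ≤ Metric.infDist y {z : H | ∀ y, f z ≤ f y} := by
      by_contra hcon
      push_neg at hcon
      obtain ⟨m, hm, hdm⟩ := (Metric.infDist_lt_iff hSne).mp hcon
      have hnorm : dist y m = ‖ρ • (x - xs) - (m - xs)‖ := by
        rw [dist_eq_norm]
        congr 1
        rw [hydef]
        abel
      have hsq : (ρ * s) ^ 2 ≤ ‖ρ • (x - xs) - (m - xs)‖ ^ 2 := by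
        rw [norm_sub_sq_real, real_inner_smul_left, norm_smul, Real.norm_eq_abs,
          abs_of_pos hρ0]
        have h1 : ρ * ⟪x - xs, m - xs⟫ ≤ 0 :=
          mul_nonpos_of_nonneg_of_nonpos hρ0.le (hxsproj m hm)
        nlinarith [sq_nonneg ‖m - xs‖]
      have : ρ * s ≤ dist y m := by
        rw [hnorm]
        have h1 : 0 ≤ ρ * s := by positivity
        nlinarith [norm_nonneg (ρ • (x - xs) - (m - xs))]
      linarith
    have hup := hsharp y hmem xs hxsmem
    have hconvy : f y - f xs ≤ ρ * Δ := by
      have hcc := hconv.2 (Set.mem_univ xs) (Set.mem_univ x) (by linarith : (0:ℝ) ≤ 1 - ρ)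
        hρ0.le (by ring)
      have he : (1 - ρ) • xs + ρ • x = y := by
        rw [hydef, smul_sub, sub_smul, one_smul]
        abel
      rw [he] at hcc
      simp only [smul_eq_mul] at hcc
      rw [hΔdef]
      nlinarith
    have hy0 : 0 ≤ f y - f xs := sub_nonneg.mpr (hxsmem y)
    have hmon : (f y - f xs) ^ θ ≤ (ρ * Δ) ^ θ :=
      Real.rpow_le_rpow hy0 hconvy hθ0.le
    calc ρ * s ≤ C * (f y - f xs) ^ θ := le_trans hlow hup
      _ ≤ C * (ρ * Δ) ^ θ := mul_le_mul_of_nonneg_left hmon hC.le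
  -- combine: Δ ^ (1 - θ) ≤ (2*C/r*b) * ρ ^ (θ - 1)
  have hΔθpos : 0 < Δ ^ θ := Real.rpow_pos_of_pos hΔ θ
  have hρθ : (ρ * Δ) ^ θ = ρ ^ θ * Δ ^ θ := Real.mul_rpow hρ0.le hΔ.le
  have hkey3 : Δ ^ (1 - θ) ≤ 2 * C / r * b * ρ ^ (θ - 1) := by
    -- from hkey1 : r/(2s) * Δ ≤ b  and hkey2 : ρ s ≤ C ρ^θ Δ^θ
    have hsle : s ≤ C * ρ ^ (θ - 1) * Δ ^ θ := by
      have : ρ * s ≤ C * (ρ ^ θ * Δ ^ θ) := by rwa [hρθ] at hkey2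
      have hρθ1 : ρ ^ (θ - 1) = ρ ^ θ / ρ := by
        rw [Real.rpow_sub hρ0, Real.rpow_one]
      rw [hρθ1]
      rw [show C * (ρ ^ θ / ρ) * Δ ^ θ = C * (ρ ^ θ * Δ ^ θ) / ρ by ring]
      rw [le_div_iff₀ hρ0, mul_comm]
      exact this
    have hΔle : Δ ≤ 2 * C / r * b * ρ ^ (θ - 1) * Δ ^ θ := by
      have h2s : (0:ℝ) < 2 * s := by positivity
      have hk : r * Δ ≤ 2 * s * b := by
        have hmul := mul_le_mul_of_nonneg_left hkey1 h2s.le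
        calc r * Δ = 2 * s * (r / (2 * s) * Δ) := by
              field_simp
          _ ≤ 2 * s * b := hmul
      have h1 : Δ ≤ 2 * s / r * b := by
        rw [div_mul_eq_mul_div, le_div_iff₀ hr, mul_comm Δ r]
        exact hk
      have h2 : 2 * s / r * b ≤ 2 * (C * ρ ^ (θ - 1) * Δ ^ θ) / r * b := by
        gcongr
      calc Δ ≤ 2 * s / r * b := h1
        _ ≤ 2 * (C * ρ ^ (θ - 1) * Δ ^ θ) / r * b := h2
        _ = 2 * C / r * b * ρ ^ (θ - 1) * Δ ^ θ := by ring
    have hsplit : Δ = Δ ^ (1 - θ) * Δ ^ θ := by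
      rw [← Real.rpow_add hΔ]
      norm_num
    have hfinal : Δ ^ (1 - θ) * Δ ^ θ ≤ 2 * C / r * b * ρ ^ (θ - 1) * Δ ^ θ :=
      hsplit ▸ hΔle
    exact le_of_mul_le_mul_right hfinal hΔθpos
  -- final rpow algebra
  have hA0 : 0 ≤ 2 * C / r * b := by positivity
  have hfin : Δ ≤ (2 * C / r * b * ρ ^ (θ - 1)) ^ (1 / (1 - θ)) := by
    have h1 : Δ = (Δ ^ (1 - θ)) ^ (1 / (1 - θ)) := by
      rw [← Real.rpow_mul hΔ.le, mul_one_div, div_self h1θ.ne', Real.rpow_one]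
    rw [h1]
    exact Real.rpow_le_rpow (Real.rpow_nonneg hΔ.le _) hkey3 (by positivity)
  have hrw : (2 * C / r * b * ρ ^ (θ - 1)) ^ (1 / (1 - θ))
      = 1 / ρ * (2 * C / r * b) ^ (1 / (1 - θ)) := by
    rw [Real.mul_rpow hA0 (Real.rpow_nonneg hρ0.le _)]
    rw [← Real.rpow_mul hρ0.le]
    have : (θ - 1) * (1 / (1 - θ)) = -1 := by
      field_simp
      ring
    rw [this, Real.rpow_neg_one]
    rw [mul_comm, inv_eq_one_div]
  rw [hrw] at hfin
  exact hfin
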